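/- Let S be a compact set of symmetric matrices in ℝ^{n×n} such that 𝒜(P) = A − B R⁻¹ Bᵀ P is Hurwitz for every P ∈ S. For P ∈ S define the Newton step 𝒩(P) as the unique solution Y of the Lyapunov equation 𝒜(P)ᵀY + Y𝒜(P) = 𝓡(P), where 𝓡(P) = Q + AᵀP + PA − P B R⁻¹ Bᵀ P. Then there exists L ≥ 0 such that ‖𝒩(P¹) − 𝒩(P²)‖_F ≤ L‖P¹ − P²‖_F for all P¹, P² ∈ S. -/

import Mathlib

open Matrix MeasureTheory Filter NormedSpace
open scoped Kronecker

noncomputable section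

/-- A real square matrix is Hurwitz if every eigenvalue over `ℂ` has negative real part. -/
def IsHurwitz {n : Type*} [Fintype n] [DecidableEq n] (X : Matrix n n ℝ) : Prop :=
  ∀ μ ∈ spectrum ℂ (X.map (algebraMap ℝ ℂ)), μ.re < 0

/-- The Frobenius norm of a real matrix. -/
def frobNorm {p q : Type*} [Fintype p] [Fintype q] (X : Matrix p q ℝ) : ℝ :=
  Real.sqrt (∑ i, ∑ j, (X i j) ^ 2)

/-- The spectral (ℓ²-operator) norm of a real matrix. -/
def spec2Norm {p q : Type*} [Fintype p] [Fintype q] [DecidableEq q] (X : Matrix p q ℝ) : ℝ :=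
  ‖LinearMap.toContinuousLinearMap (Matrix.toEuclideanLin X)‖

attribute [local instance] Matrix.normedAddCommGroup Matrix.normedSpace

/-! ### Auxiliary material -/

open Polynomial Metric

section AlgebraicCore

lemma aeval_comm_pass {k : ℕ} (a b x : Matrix (Fin k) (Fin k) ℂ)
    (h : a * x = x * b) (p : ℂ[X]) : (aeval a p) * x = x * (aeval b p) := by
  have hpow : ∀ i : ℕ, a ^ i * x = x * b ^ i := by
    intro i
    induction i with
    | zero => simp
    | succ i ih =>
      rw [pow_succ, pow_succ, mul_assoc, h, ← mul_assoc, ih, mul_assoc]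
  rw [aeval_eq_sum_range a, aeval_eq_sum_range b, Finset.sum_mul, Finset.mul_sum]
  refine Finset.sum_congr rfl fun i _ => ?_
  rw [smul_mul_assoc, mul_smul_comm, hpow]

lemma root_charpoly_mem_spectrum {k : ℕ} (M : Matrix (Fin k) (Fin k) ℂ) {r : ℂ}
    (h : r ∈ M.charpoly.roots) : r ∈ spectrum ℂ M := by
  have hr : M.charpoly.eval r = 0 := isRoot_of_mem_roots h
  have hdet : (scalar (Fin k) r - M).det = 0 := by
    rw [← hr, Matrix.charpoly, eval_det, matPolyEquiv_charmatrix, eval_sub, eval_X, eval_C]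
  rw [spectrum.mem_iff]
  intro hu
  rw [Matrix.isUnit_iff_isUnit_det] at hu
  have halg : (algebraMap ℂ (Matrix (Fin k) (Fin k) ℂ)) r = scalar (Fin k) r := by
    ext i j
    simp [Matrix.algebraMap_matrix_apply, Matrix.scalar_apply, Matrix.diagonal]
  rw [halg, hdet] at hu
  exact hu.ne_zero rfl

lemma spectrum_transpose_mem {k : ℕ} (M : Matrix (Fin k) (Fin k) ℂ) (c : ℂ) :
    c ∈ spectrum ℂ Mᵀ ↔ c ∈ spectrum ℂ M := by
  simp only [spectrum.mem_iff, not_iff_not, Matrix.isUnit_iff_isUnit_det]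
  have : (algebraMap ℂ (Matrix (Fin k) (Fin k) ℂ) c - Mᵀ) = (algebraMap ℂ _ c - M)ᵀ := by
    simp [transpose_sub, Algebra.algebraMap_eq_smul_one, transpose_smul]
  rw [this, Matrix.det_transpose]

lemma lyap_inj {k : ℕ} (M N : Matrix (Fin k) (Fin k) ℂ)
    (hs : ∀ μ ∈ spectrum ℂ M, μ.re < 0) (h : Mᵀ * N + N * M = 0) : N = 0 := by
  have h' : (-Mᵀ) * N = N * M := by
    have := eq_neg_of_add_eq_zero_left h
    rw [neg_mul, this, neg_neg]
  have key : (aeval (-Mᵀ)) M.charpoly * N = 0 := by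
    rw [aeval_comm_pass _ _ _ h', Matrix.aeval_self_charpoly, mul_zero]
  have hsp : M.charpoly.Splits := IsAlgClosed.splits _
  have hfac : M.charpoly = (M.charpoly.roots.map fun r => X - C r).prod :=
    hsp.eq_prod_roots_of_monic M.charpoly_monic
  have gen : ∀ s : Multiset ℂ, (∀ r ∈ s, IsUnit ((aeval (-Mᵀ)) (X - C r))) →
      IsUnit ((aeval (-Mᵀ)) (s.map fun r => X - C r).prod) := by
    intro s
    induction s using Multiset.induction with
    | empty => simp
    | cons r s ih =>
      intro h
      rw [Multiset.map_cons, Multiset.prod_cons, _root_.map_mul]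
      exact (h r (Multiset.mem_cons_self _ _)).mul
        (ih fun r' hr' => h r' (Multiset.mem_cons_of_mem hr'))
  have hu : IsUnit ((aeval (-Mᵀ)) M.charpoly) := by
    rw [hfac]
    refine gen _ ?_
    intro r hr
    have hx1 : (aeval (-Mᵀ)) (X - C r) = algebraMap ℂ _ (-r) - Mᵀ := by
      rw [map_sub, aeval_X, aeval_C, map_neg]
      abel
    rw [hx1, ← spectrum.notMem_iff]
    rw [spectrum_transpose_mem]
    intro hmem
    have h1 := hs _ hmem
    have h2 := hs r (root_charpoly_mem_spectrum M hr)
    simp only [Complex.neg_re] at h1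
    linarith
  obtain ⟨u, hu⟩ := hu
  calc N = ↑u⁻¹ * (↑u * N) := by rw [← mul_assoc, Units.inv_mul, one_mul]
  _ = 0 := by rw [hu, key, mul_zero]

lemma lyap_inj_real {k : ℕ} (M : Matrix (Fin k) (Fin k) ℝ) (hs : IsHurwitz M)
    (N : Matrix (Fin k) (Fin k) ℝ) (h : Mᵀ * N + N * M = 0) : N = 0 := by
  set φ := algebraMap ℝ ℂ
  have hmap : (M.map φ)ᵀ * N.map φ + N.map φ * M.map φ = 0 := by
    have := congrArg (fun X : Matrix (Fin k) (Fin k) ℝ => X.map φ) h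
    simpa [Matrix.map_add, Matrix.map_mul, Matrix.transpose_map] using this
  have := lyap_inj (M.map φ) (N.map φ) hs hmap
  ext i j
  have h2 : φ (N i j) = 0 := by
    have := congrFun (congrFun this i) j
    simpa [Matrix.map_apply] using this
  rw [Matrix.zero_apply]
  have h3 : ((N i j : ℝ) : ℂ) = 0 := h2
  exact_mod_cast h3

end AlgebraicCore

section Analysis

lemma lipschitz_of_contDiffOn_compact
    {E F : Type*} [NormedAddCommGroup E] [NormedSpace ℝ E] [FiniteDimensional ℝ E]
    [NormedAddCommGroup F] [NormedSpace ℝ F]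
    {f : E → F} {U : Set E} (hU : IsOpen U) (hf : ContDiffOn ℝ 1 f U)
    {S : Set E} (hS : IsCompact S) (hSU : S ⊆ U) :
    ∃ L : ℝ, 0 ≤ L ∧ ∀ x ∈ S, ∀ y ∈ S, ‖f x - f y‖ ≤ L * ‖x - y‖ := by
  obtain ⟨δ, δpos, hδ⟩ := hS.exists_cthickening_subset_open hU hSU
  have hKc : IsCompact (cthickening δ S) := hS.cthickening
  have hf' : ContinuousOn (fderiv ℝ f) U := hf.continuousOn_fderiv_of_isOpen hU le_rfl
  obtain ⟨C, hC⟩ := hKc.exists_bound_of_continuousOn (hf'.mono hδ)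
  obtain ⟨M0, hM0⟩ := hS.exists_bound_of_continuousOn (hf.continuousOn.mono hSU)
  set L : ℝ := max C 0 + 2 * max M0 0 / δ with hL
  have hL0 : 0 ≤ L := by positivity
  refine ⟨L, hL0, fun x hx y hy => ?_⟩
  rcases le_or_gt ‖x - y‖ δ with hle | hlt
  · have hseg : segment ℝ x y ⊆ cthickening δ S := by
      intro z hz
      have : z ∈ closedBall x δ :=
        (convex_closedBall x δ).segment_subset (mem_closedBall_self δpos.le)
          (by simpa [dist_eq_norm, norm_sub_rev] using hle) hz
      exact mem_cthickening_of_dist_le z x δ S hx (by simpa [dist_eq_norm] using this)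
    have hdiff : ∀ z ∈ segment ℝ x y, DifferentiableAt ℝ f z := fun z hz =>
      (hf.contDiffAt (hU.mem_nhds (hδ (hseg hz)))).differentiableAt one_ne_zero
    have hbound : ∀ z ∈ segment ℝ x y, ‖fderiv ℝ f z‖ ≤ L := fun z hz => by
      refine le_trans (hC _ (hseg hz)) ?_
      refine le_trans (le_max_left C 0) ?_
      have : 0 ≤ 2 * max M0 0 / δ := by positivity
      rw [hL]; linarith
    have := (convex_segment x y).norm_image_sub_le_of_norm_fderiv_le hdiff hbound
      (right_mem_segment ℝ x y) (left_mem_segment ℝ x y)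
    simpa using this
  · have h1 : ‖f x - f y‖ ≤ 2 * max M0 0 :=
      le_trans (norm_sub_le _ _) (by
        have h3 : ‖f x‖ ≤ max M0 0 := le_trans (hM0 x hx) (le_max_left _ _)
        have h4 : ‖f y‖ ≤ max M0 0 := le_trans (hM0 y hy) (le_max_left _ _)
        linarith)
    have h2 : 2 * max M0 0 ≤ 2 * max M0 0 / δ * ‖x - y‖ := by
      rw [div_mul_eq_mul_div, le_div_iff₀ δpos]
      have : 0 ≤ 2 * max M0 0 := by positivity
      nlinarith
    refine le_trans h1 (le_trans h2 ?_)
    have : 0 ≤ max C 0 * ‖x - y‖ := by positivity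
    rw [hL, add_mul]; linarith

lemma isUnit_clm_of_injective {E : Type*} [NormedAddCommGroup E] [NormedSpace ℝ E]
    [FiniteDimensional ℝ E] (f : E →L[ℝ] E) (hf : Function.Injective f) : IsUnit f := by
  have hsurj : Function.Surjective f :=
    (LinearMap.injective_iff_surjective (f := (f : E →ₗ[ℝ] E))).mp hf
  let e0 : E ≃ₗ[ℝ] E := LinearEquiv.ofBijective (f : E →ₗ[ℝ] E) ⟨hf, hsurj⟩
  let e : E ≃L[ℝ] E := e0.toContinuousLinearEquiv
  refine ⟨⟨(e : E →L[ℝ] E), (e.symm : E →L[ℝ] E), ?_, ?_⟩, ?_⟩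
  · refine ContinuousLinearMap.ext fun x => ?_
    simp [ContinuousLinearMap.mul_apply]
  · refine ContinuousLinearMap.ext fun x => ?_
    simp [ContinuousLinearMap.mul_apply]
  · refine ContinuousLinearMap.ext fun x => ?_
    rfl

lemma frobNorm_le_card_mul_norm {k : ℕ} (X : Matrix (Fin k) (Fin k) ℝ) :
    frobNorm X ≤ k * ‖X‖ := by
  have hXn : (0:ℝ) ≤ ‖X‖ := norm_nonneg X
  have h1 : ∑ i, ∑ j, (X i j) ^ 2 ≤ (k * ‖X‖) ^ 2 := by
    have hij : ∀ i j : Fin k, (X i j) ^ 2 ≤ ‖X‖ ^ 2 := by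
      intro i j
      have h := Matrix.norm_entry_le_entrywise_sup_norm X (i := i) (j := j)
      rw [Real.norm_eq_abs] at h
      calc (X i j) ^ 2 = |X i j| ^ 2 := (sq_abs _).symm
      _ ≤ ‖X‖ ^ 2 := by nlinarith [abs_nonneg (X i j)]
    calc ∑ i, ∑ j, (X i j) ^ 2 ≤ ∑ _i : Fin k, ∑ _j : Fin k, ‖X‖ ^ 2 :=
          Finset.sum_le_sum fun i _ => Finset.sum_le_sum fun j _ => hij i j
    _ = (k * ‖X‖) ^ 2 := by simp [Finset.sum_const]; ring
  calc frobNorm X ≤ Real.sqrt ((k * ‖X‖) ^ 2) := Real.sqrt_le_sqrt h1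
  _ = k * ‖X‖ := Real.sqrt_sq (by positivity)

lemma norm_le_frobNorm {k : ℕ} (X : Matrix (Fin k) (Fin k) ℝ) : ‖X‖ ≤ frobNorm X := by
  have hf : 0 ≤ frobNorm X := Real.sqrt_nonneg _
  refine (pi_norm_le_iff_of_nonneg hf).mpr fun i => ?_
  refine (pi_norm_le_iff_of_nonneg hf).mpr fun j => ?_
  rw [Real.norm_eq_abs, ← Real.sqrt_sq_eq_abs]
  refine Real.sqrt_le_sqrt ?_
  calc (X i j)^2 ≤ ∑ j', (X i j') ^ 2 :=
        Finset.single_le_sum (f := fun j' => (X i j') ^ 2)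
          (fun j' _ => sq_nonneg _) (Finset.mem_univ j)
  _ ≤ ∑ i', ∑ j', (X i' j') ^ 2 :=
        Finset.single_le_sum (f := fun i' => ∑ j', (X i' j') ^ 2)
          (fun i' _ => Finset.sum_nonneg fun j' _ => sq_nonneg _) (Finset.mem_univ i)

end Analysis

instance instNACGMatCLM {n : ℕ} :
    NormedAddCommGroup (Matrix (Fin n) (Fin n) ℝ →L[ℝ] Matrix (Fin n) (Fin n) ℝ) :=
  ContinuousLinearMap.toNormedAddCommGroup

instance instNSMatCLM {n : ℕ} :
    NormedSpace ℝ (Matrix (Fin n) (Fin n) ℝ →L[ℝ] Matrix (Fin n) (Fin n) ℝ) :=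
  ContinuousLinearMap.toNormedSpace

instance instNRMatCLM {n : ℕ} :
    NormedRing (Matrix (Fin n) (Fin n) ℝ →L[ℝ] Matrix (Fin n) (Fin n) ℝ) :=
  ContinuousLinearMap.toNormedRing

instance instNAMatCLM {n : ℕ} :
    NormedAlgebra ℝ (Matrix (Fin n) (Fin n) ℝ →L[ℝ] Matrix (Fin n) (Fin n) ℝ) :=
  ContinuousLinearMap.toNormedAlgebra

instance instCSMatCLM {n : ℕ} :
    CompleteSpace (Matrix (Fin n) (Fin n) ℝ →L[ℝ] Matrix (Fin n) (Fin n) ℝ) :=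
  FiniteDimensional.complete ℝ _

instance instHSGMatCLM {n : ℕ} :
    HasSummableGeomSeries (Matrix (Fin n) (Fin n) ℝ →L[ℝ] Matrix (Fin n) (Fin n) ℝ) := by
  constructor
  intro x hx
  have h1 : Summable fun k : ℕ ↦ ‖x‖ ^ k := summable_geometric_of_lt_one (norm_nonneg _) hx
  exact @Summable.of_norm_bounded_eventually_nat _ _ instCSMatCLM _ _ h1
    (eventually_norm_pow_le x)

namespace NewtonAux

variable {n m : ℕ} (A : Matrix (Fin n) (Fin n) ℝ) (B : Matrix (Fin n) (Fin m) ℝ)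
  (Q : Matrix (Fin n) (Fin n) ℝ) (R : Matrix (Fin m) (Fin m) ℝ)

local notation "E" => Matrix (Fin n) (Fin n) ℝ

/-- The Lyapunov operator associated to `P`. -/
def T (P : E) : E →L[ℝ] E :=
  LinearMap.toContinuousLinearMap
    { toFun := fun N => (A - B * R⁻¹ * Bᵀ * P)ᵀ * N + N * (A - B * R⁻¹ * Bᵀ * P)
      map_add' := fun N₁ N₂ => by
        simp only [Matrix.mul_add, Matrix.add_mul]
        abel
      map_smul' := fun c N => by
        simp only [Matrix.mul_smul, Matrix.smul_mul, smul_add, RingHom.id_apply] }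

lemma T_apply (P N : E) :
    T A B R P N = (A - B * R⁻¹ * Bᵀ * P)ᵀ * N + N * (A - B * R⁻¹ * Bᵀ * P) := rfl

/-- Constant part of `T`. -/
def Tconst : E →L[ℝ] E :=
  LinearMap.toContinuousLinearMap
    { toFun := fun N => Aᵀ * N + N * A
      map_add' := fun N₁ N₂ => by
        simp only [Matrix.mul_add, Matrix.add_mul]
        abel
      map_smul' := fun c N => by
        simp only [Matrix.mul_smul, Matrix.smul_mul, smul_add, RingHom.id_apply] }

/-- Linear (in `P`) part of `T`. -/
def Tmul : E →ₗ[ℝ] (E →L[ℝ] E) where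
  toFun P := LinearMap.toContinuousLinearMap
    { toFun := fun N => (B * R⁻¹ * Bᵀ * P)ᵀ * N + N * (B * R⁻¹ * Bᵀ * P)
      map_add' := fun N₁ N₂ => by
        simp only [Matrix.mul_add, Matrix.add_mul]
        abel
      map_smul' := fun c N => by
        simp only [Matrix.mul_smul, Matrix.smul_mul, smul_add, RingHom.id_apply] }
  map_add' P₁ P₂ := by
    refine ContinuousLinearMap.ext fun N => ?_
    simp only [LinearMap.coe_toContinuousLinearMap', LinearMap.coe_mk, AddHom.coe_mk,
      ContinuousLinearMap.add_apply, Matrix.mul_add, Matrix.add_mul, transpose_add]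
    abel
  map_smul' c P := by
    refine ContinuousLinearMap.ext fun N => ?_
    simp only [LinearMap.coe_toContinuousLinearMap', LinearMap.coe_mk, AddHom.coe_mk,
      RingHom.id_apply, ContinuousLinearMap.smul_apply, Matrix.mul_smul, Matrix.smul_mul,
      transpose_smul, smul_add]

lemma T_eq (P : E) : T A B R P = Tconst A - Tmul B R P := by
  refine ContinuousLinearMap.ext fun N => ?_
  simp only [T, Tconst, Tmul, ContinuousLinearMap.sub_apply,
    LinearMap.coe_toContinuousLinearMap', LinearMap.coe_mk, AddHom.coe_mk]
  simp only [Matrix.sub_mul, Matrix.mul_sub, transpose_sub]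
  abel

lemma contDiff_T : ContDiff ℝ 1 (T A B R) := by
  have : T A B R = fun P => Tconst A - (LinearMap.toContinuousLinearMap (Tmul B R)) P := by
    funext P
    simpa using T_eq A B R P
  rw [this]
  exact contDiff_const.sub (LinearMap.toContinuousLinearMap (Tmul B R)).contDiff

/-- The quadratic residual. -/
def Rfun (P : E) : E :=
  Q + Aᵀ * P + P * A - P * B * R⁻¹ * Bᵀ * P

/-- Linear part of `Rfun`. -/
def Rlin : E →ₗ[ℝ] E where
  toFun P := Aᵀ * P + P * A
  map_add' P₁ P₂ := by simp only [Matrix.mul_add, Matrix.add_mul]; abel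
  map_smul' c P := by
    simp only [Matrix.mul_smul, Matrix.smul_mul, smul_add, RingHom.id_apply]

/-- The quadratic part of `Rfun` as a linear family of CLMs. -/
def Rquad : E →ₗ[ℝ] (E →L[ℝ] E) where
  toFun P := LinearMap.toContinuousLinearMap
    { toFun := fun N => P * B * R⁻¹ * Bᵀ * N
      map_add' := fun N₁ N₂ => by simp only [Matrix.mul_add]
      map_smul' := fun c N => by
        simp only [Matrix.mul_smul, RingHom.id_apply] }
  map_add' P₁ P₂ := by
    refine ContinuousLinearMap.ext fun N => ?_
    simp only [LinearMap.coe_toContinuousLinearMap', LinearMap.coe_mk, AddHom.coe_mk,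
      ContinuousLinearMap.add_apply, Matrix.add_mul]
  map_smul' c P := by
    refine ContinuousLinearMap.ext fun N => ?_
    simp only [LinearMap.coe_toContinuousLinearMap', LinearMap.coe_mk, AddHom.coe_mk,
      RingHom.id_apply, ContinuousLinearMap.smul_apply, Matrix.smul_mul]

lemma contDiff_Rfun : ContDiff ℝ 1 (Rfun A B Q R) := by
  have : Rfun A B Q R = fun P =>
      (Q + (LinearMap.toContinuousLinearMap (Rlin A)) P) -
        ((LinearMap.toContinuousLinearMap (Rquad B R)) P) P := by
    funext P
    simp only [Rfun, Rlin, Rquad, LinearMap.coe_toContinuousLinearMap', LinearMap.coe_mk,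
      AddHom.coe_mk]
    abel
  rw [this]
  exact (contDiff_const.add (LinearMap.toContinuousLinearMap (Rlin A)).contDiff).sub
    (((LinearMap.toContinuousLinearMap (Rquad B R)).contDiff).clm_apply contDiff_id)

end NewtonAux

/-- the Newton step `𝒩(P) = L_{𝒜(P)}⁻¹(𝓡(P))` is Lipschitz on a compact
set of symmetric matrices on which `𝒜(P)` is Hurwitz. -/
theorem newton_step_lipschitz_on_compact
    (n m : ℕ) (hn : 0 < n) (hm : 0 < m)
    (A : Matrix (Fin n) (Fin n) ℝ) (B : Matrix (Fin n) (Fin m) ℝ)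
    (Q : Matrix (Fin n) (Fin n) ℝ) (R : Matrix (Fin m) (Fin m) ℝ)
    (hQ : Q.PosSemidef) (hR : R.PosDef)
    (S : Set (Matrix (Fin n) (Fin n) ℝ)) (hScompact : IsCompact S)
    (hSsymm : ∀ P ∈ S, P.IsSymm)
    (hSHur : ∀ P ∈ S, IsHurwitz (A - B * R⁻¹ * Bᵀ * P)) :
    ∃ L : ℝ, 0 ≤ L ∧ ∀ P₁ ∈ S, ∀ P₂ ∈ S,
      ∀ N₁ N₂ : Matrix (Fin n) (Fin n) ℝ,
        (A - B * R⁻¹ * Bᵀ * P₁)ᵀ * N₁ + N₁ * (A - B * R⁻¹ * Bᵀ * P₁)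
            = Q + Aᵀ * P₁ + P₁ * A - P₁ * B * R⁻¹ * Bᵀ * P₁ →
        (A - B * R⁻¹ * Bᵀ * P₂)ᵀ * N₂ + N₂ * (A - B * R⁻¹ * Bᵀ * P₂)
            = Q + Aᵀ * P₂ + P₂ * A - P₂ * B * R⁻¹ * Bᵀ * P₂ →
        frobNorm (N₁ - N₂) ≤ L * frobNorm (P₁ - P₂) := by
  classical
  set U : Set (Matrix (Fin n) (Fin n) ℝ) := {P | IsUnit (NewtonAux.T A B R P)} with hUdef
  have hU : IsOpen U := Units.isOpen.preimage (NewtonAux.contDiff_T A B R).continuous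
  have hTinj : ∀ P ∈ S, Function.Injective (NewtonAux.T A B R P) := by
    intro P hP N₁ N₂ h12
    have h0 : NewtonAux.T A B R P (N₁ - N₂) = 0 := by rw [map_sub, h12, sub_self]
    rw [NewtonAux.T_apply] at h0
    exact sub_eq_zero.mp (lyap_inj_real _ (hSHur P hP) (N₁ - N₂) h0)
  have hSU : S ⊆ U := fun P hP => isUnit_clm_of_injective _ (hTinj P hP)
  set f : Matrix (Fin n) (Fin n) ℝ → Matrix (Fin n) (Fin n) ℝ :=
    fun P => Ring.inverse (NewtonAux.T A B R P) (NewtonAux.Rfun A B Q R P) with hfdef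
  have hfC : ContDiffOn ℝ 1 f U := by
    intro P hP
    obtain ⟨u, hu⟩ := hP
    have h2 : ContDiffAt ℝ 1 Ring.inverse (NewtonAux.T A B R P) := by
      rw [← hu]; exact contDiffAt_ringInverse ℝ u
    have h1 : ContDiffAt ℝ 1 (fun P => Ring.inverse (NewtonAux.T A B R P)) P :=
      h2.comp P (NewtonAux.contDiff_T A B R).contDiffAt
    exact (h1.clm_apply (NewtonAux.contDiff_Rfun A B Q R).contDiffAt).contDiffWithinAt
  obtain ⟨L, hL0, hLip⟩ := lipschitz_of_contDiffOn_compact hU hfC hScompact hSU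
  refine ⟨n * L, mul_nonneg (Nat.cast_nonneg n) hL0, ?_⟩
  intro P₁ hP₁ P₂ hP₂ N₁ N₂ h₁ h₂
  have key : ∀ P ∈ S, ∀ N : Matrix (Fin n) (Fin n) ℝ,
      (A - B * R⁻¹ * Bᵀ * P)ᵀ * N + N * (A - B * R⁻¹ * Bᵀ * P)
        = Q + Aᵀ * P + P * A - P * B * R⁻¹ * Bᵀ * P → N = f P := by
    intro P hP N hN
    have e1 : NewtonAux.T A B R P N = NewtonAux.Rfun A B Q R P := by
      rw [NewtonAux.T_apply]; exact hN
    have e2 : NewtonAux.T A B R P (f P) = NewtonAux.Rfun A B Q R P := by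
      rw [hfdef]
      rw [← ContinuousLinearMap.mul_apply, Ring.mul_inverse_cancel _ (hSU hP),
        ContinuousLinearMap.one_apply]
    exact hTinj P hP (e1.trans e2.symm)
  rw [key P₁ hP₁ N₁ h₁, key P₂ hP₂ N₂ h₂]
  calc frobNorm (f P₁ - f P₂) ≤ n * ‖f P₁ - f P₂‖ := frobNorm_le_card_mul_norm _
  _ ≤ n * (L * ‖P₁ - P₂‖) :=
      mul_le_mul_of_nonneg_left (hLip P₁ hP₁ P₂ hP₂) (Nat.cast_nonneg n)
  _ ≤ n * (L * frobNorm (P₁ - P₂)) := by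
      refine mul_le_mul_of_nonneg_left ?_ (Nat.cast_nonneg n)
      exact mul_le_mul_of_nonneg_left (norm_le_frobNorm _) hL0
  _ = n * L * frobNorm (P₁ - P₂) := by ring
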